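/- A digraph G is a directed co-graph if and only if G can be constructed recursively from single vertices by taking disjoint unions and adding directed twins (where adding a directed twin of a vertex x means adding a new vertex y with N⁻(y)\{x} = N⁻(x)\{y} and N⁺(y)\{x} = N⁺(x)\{y}, with any of the four possible adjacency patterns between x and y: no arcs, arc (x,y) only, arc (y,x) only, or both arcs). -/
import Mathlib
set_option maxHeartbeats 1000000


/-- Arc relation of the induced subdigraph on a vertex set `S`. -/
def restrict (A : ℕ → ℕ → Prop) (S : Finset ℕ) : ℕ → ℕ → Prop :=
  fun x y => A x y ∧ x ∈ S ∧ y ∈ S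

/-- `walkLen A n u v`: there is a directed walk of length `n` from `u` to `v`. -/
def walkLen (A : ℕ → ℕ → Prop) : ℕ → ℕ → ℕ → Prop
  | 0, u, v => u = v
  | n + 1, u, v => ∃ w, A u w ∧ walkLen A n w v

/-- `v` is reachable from `u` by a directed walk. -/
def Reach (A : ℕ → ℕ → Prop) (u v : ℕ) : Prop :=
  ∃ n, walkLen A n u v

/-- Directed distance: length of a shortest directed walk (= shortest directed path). -/
noncomputable def ddist (A : ℕ → ℕ → Prop) (u v : ℕ) : ℕ :=
  sInf {n | walkLen A n u v}

/-- `x` and `y` are directed twins: `N⁻(x)\{y} = N⁻(y)\{x}` and `N⁺(x)\{y} = N⁺(y)\{x}`. -/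
def DTwins (A : ℕ → ℕ → Prop) (x y : ℕ) : Prop :=
  x ≠ y ∧
    {w | A w x} \ {y} = {w | A w y} \ {x} ∧
    {w | A x w} \ {y} = {w | A y w} \ {x}

/-- The arc relation obtained by adding a new vertex `u` as a directed twin of `v`;
`auv`, `avu` determine which of the arcs `(u,v)`, `(v,u)` are present (any of the
four adjacency patterns between the twins). -/
def twinArc (A : ℕ → ℕ → Prop) (v u : ℕ) (auv avu : Prop) : ℕ → ℕ → Prop :=
  fun x y => A x y ∨ (x = u ∧ y = v ∧ auv) ∨ (x = v ∧ y = u ∧ avu) ∨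
    (x = u ∧ A v y) ∨ (y = u ∧ A x v)

/-- Directed co-graphs: single vertices, disjoint union, series and order composition. -/
inductive DCo : Finset ℕ → (ℕ → ℕ → Prop) → Prop
  | single (v : ℕ) : DCo {v} (fun _ _ => False)
  | union {V₁ V₂ : Finset ℕ} {A₁ A₂ : ℕ → ℕ → Prop} :
      Disjoint V₁ V₂ → DCo V₁ A₁ → DCo V₂ A₂ →
      DCo (V₁ ∪ V₂) (fun x y => A₁ x y ∨ A₂ x y)
  | series {V₁ V₂ : Finset ℕ} {A₁ A₂ : ℕ → ℕ → Prop} :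
      Disjoint V₁ V₂ → DCo V₁ A₁ → DCo V₂ A₂ →
      DCo (V₁ ∪ V₂)
        (fun x y => A₁ x y ∨ A₂ x y ∨ (x ∈ V₁ ∧ y ∈ V₂) ∨ (x ∈ V₂ ∧ y ∈ V₁))
  | order {V₁ V₂ : Finset ℕ} {A₁ A₂ : ℕ → ℕ → Prop} :
      Disjoint V₁ V₂ → DCo V₁ A₁ → DCo V₂ A₂ →
      DCo (V₁ ∪ V₂) (fun x y => A₁ x y ∨ A₂ x y ∨ (x ∈ V₁ ∧ y ∈ V₂))

/-- Extended directed co-graphs: additionally closed under directed union. -/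
inductive ExtDCo : Finset ℕ → (ℕ → ℕ → Prop) → Prop
  | single (v : ℕ) : ExtDCo {v} (fun _ _ => False)
  | union {V₁ V₂ : Finset ℕ} {A₁ A₂ : ℕ → ℕ → Prop} :
      Disjoint V₁ V₂ → ExtDCo V₁ A₁ → ExtDCo V₂ A₂ →
      ExtDCo (V₁ ∪ V₂) (fun x y => A₁ x y ∨ A₂ x y)
  | series {V₁ V₂ : Finset ℕ} {A₁ A₂ : ℕ → ℕ → Prop} :
      Disjoint V₁ V₂ → ExtDCo V₁ A₁ → ExtDCo V₂ A₂ →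
      ExtDCo (V₁ ∪ V₂)
        (fun x y => A₁ x y ∨ A₂ x y ∨ (x ∈ V₁ ∧ y ∈ V₂) ∨ (x ∈ V₂ ∧ y ∈ V₁))
  | order {V₁ V₂ : Finset ℕ} {A₁ A₂ : ℕ → ℕ → Prop} :
      Disjoint V₁ V₂ → ExtDCo V₁ A₁ → ExtDCo V₂ A₂ →
      ExtDCo (V₁ ∪ V₂) (fun x y => A₁ x y ∨ A₂ x y ∨ (x ∈ V₁ ∧ y ∈ V₂))
  | dUnion {V₁ V₂ : Finset ℕ} {A₁ A₂ : ℕ → ℕ → Prop} (R : ℕ → ℕ → Prop) :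
      Disjoint V₁ V₂ → ExtDCo V₁ A₁ → ExtDCo V₂ A₂ →
      ExtDCo (V₁ ∪ V₂) (fun x y => A₁ x y ∨ A₂ x y ∨ (x ∈ V₁ ∧ y ∈ V₂ ∧ R x y))

/-- Digraphs constructible from single vertices by disjoint union and adding directed twins. -/
inductive TwinBuilt : Finset ℕ → (ℕ → ℕ → Prop) → Prop
  | single (v : ℕ) : TwinBuilt {v} (fun _ _ => False)
  | union {V₁ V₂ : Finset ℕ} {A₁ A₂ : ℕ → ℕ → Prop} :
      Disjoint V₁ V₂ → TwinBuilt V₁ A₁ → TwinBuilt V₂ A₂ →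
      TwinBuilt (V₁ ∪ V₂) (fun x y => A₁ x y ∨ A₂ x y)
  | twin {V : Finset ℕ} {A : ℕ → ℕ → Prop} (v u : ℕ) (auv avu : Prop) :
      v ∈ V → u ∉ V → TwinBuilt V A →
      TwinBuilt (insert u V) (twinArc A v u auv avu)

/-- Twin-distance-hereditary digraphs: built from a single vertex by disjoint union,
adding directed twins, and adding pendant plus / pendant minus vertices. -/
inductive TwinDH : Finset ℕ → (ℕ → ℕ → Prop) → Prop
  | single (v : ℕ) : TwinDH {v} (fun _ _ => False)
  | union {V₁ V₂ : Finset ℕ} {A₁ A₂ : ℕ → ℕ → Prop} :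
      Disjoint V₁ V₂ → TwinDH V₁ A₁ → TwinDH V₂ A₂ →
      TwinDH (V₁ ∪ V₂) (fun x y => A₁ x y ∨ A₂ x y)
  | twin {V : Finset ℕ} {A : ℕ → ℕ → Prop} (v u : ℕ) (auv avu : Prop) :
      v ∈ V → u ∉ V → TwinDH V A →
      TwinDH (insert u V) (twinArc A v u auv avu)
  | pendPlus {V : Finset ℕ} {A : ℕ → ℕ → Prop} (a u : ℕ) :
      a ∈ V → u ∉ V → TwinDH V A →
      TwinDH (insert u V) (fun x y => A x y ∨ (x = u ∧ y = a))
  | pendMinus {V : Finset ℕ} {A : ℕ → ℕ → Prop} (a u : ℕ) :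
      a ∈ V → u ∉ V → TwinDH V A →
      TwinDH (insert u V) (fun x y => A x y ∨ (x = a ∧ y = u))

/-- Undirected distance-hereditary graphs, via the recursive characterization:
built from a single vertex by pendant vertices, false twins and true twins. -/
inductive UDH : Finset ℕ → (ℕ → ℕ → Prop) → Prop
  | single (v : ℕ) : UDH {v} (fun _ _ => False)
  | pendant {V : Finset ℕ} {E : ℕ → ℕ → Prop} (a u : ℕ) :
      a ∈ V → u ∉ V → UDH V E →
      UDH (insert u V) (fun x y => E x y ∨ (x = u ∧ y = a) ∨ (x = a ∧ y = u))
  | falseTwin {V : Finset ℕ} {E : ℕ → ℕ → Prop} (v u : ℕ) :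
      v ∈ V → u ∉ V → UDH V E →
      UDH (insert u V) (fun x y => E x y ∨ (x = u ∧ E v y) ∨ (y = u ∧ E x v))
  | trueTwin {V : Finset ℕ} {E : ℕ → ℕ → Prop} (v u : ℕ) :
      v ∈ V → u ∉ V → UDH V E →
      UDH (insert u V)
        (fun x y => E x y ∨ (x = u ∧ E v y) ∨ (y = u ∧ E x v) ∨
          (x = u ∧ y = v) ∨ (x = v ∧ y = u))

/-- The induced subdigraph on `C` is strongly connected. -/
def StronglyConn (A : ℕ → ℕ → Prop) (C : Finset ℕ) : Prop :=
  ∀ u ∈ C, ∀ v ∈ C, Reach (restrict A C) u v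

/-- `C` is a strong component of the digraph with vertex set `V` and arcs `A`. -/
def IsStrongComponent (A : ℕ → ℕ → Prop) (V C : Finset ℕ) : Prop :=
  C.Nonempty ∧ C ⊆ V ∧ StronglyConn A C ∧
    ∀ D, C ⊆ D → D ⊆ V → StronglyConn A D → D = C

/-- The induced subdigraph on `S` is weakly connected. -/
def WeaklyConn (A : ℕ → ℕ → Prop) (S : Finset ℕ) : Prop :=
  S.Nonempty ∧ ∀ u ∈ S, ∀ v ∈ S,
    Relation.ReflTransGen (fun x y => restrict A S x y ∨ restrict A S y x) u v

/-- The induced subdigraph on `V` is acyclic. -/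
def AcyclicOn (A : ℕ → ℕ → Prop) (V : Finset ℕ) : Prop :=
  ∀ v ∈ V, ∀ n, 0 < n → ¬ walkLen (restrict A V) n v v

/-- `CRle A V r`: the cycle rank of the digraph `(V, A)` is at most `r`.
This is the standard recursive definition: acyclic digraphs have rank 0, digraphs
decompose into their strong components, and deleting a vertex decreases rank by
at most one. -/
inductive CRle (A : ℕ → ℕ → Prop) : Finset ℕ → ℕ → Prop
  | base {V : Finset ℕ} {r : ℕ} : AcyclicOn A V → CRle A V r
  | scc {V : Finset ℕ} {r : ℕ} :
      (∀ C, IsStrongComponent A V C → CRle A C r) → CRle A V r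
  | step {V : Finset ℕ} {r : ℕ} (v : ℕ) :
      v ∈ V → CRle A (V.erase v) r → CRle A V (r + 1)

/-- The cycle rank of the digraph `(V, A)`. -/
noncomputable def cycleRank (A : ℕ → ℕ → Prop) (V : Finset ℕ) : ℕ :=
  sInf {r | CRle A V r}

/-- `CW k V A f`: the `k`-labeled digraph with vertices `V`, arcs `A` and labeling `f`
is constructible by a directed clique-width `k`-expression. -/
inductive CW (k : ℕ) : Finset ℕ → (ℕ → ℕ → Prop) → (ℕ → Fin k) → Prop
  | vertex (v : ℕ) (a : Fin k) : CW k {v} (fun _ _ => False) (fun _ => a)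
  | union {V₁ V₂ : Finset ℕ} {A₁ A₂ : ℕ → ℕ → Prop} {f₁ f₂ : ℕ → Fin k} :
      Disjoint V₁ V₂ → CW k V₁ A₁ f₁ → CW k V₂ A₂ f₂ →
      CW k (V₁ ∪ V₂) (fun x y => A₁ x y ∨ A₂ x y)
        (fun x => if x ∈ V₁ then f₁ x else f₂ x)
  | addArcs {V : Finset ℕ} {A : ℕ → ℕ → Prop} {f : ℕ → Fin k} (a b : Fin k) :
      a ≠ b → CW k V A f →
      CW k V (fun x y => A x y ∨ (x ∈ V ∧ y ∈ V ∧ f x = a ∧ f y = b)) f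
  | relabel {V : Finset ℕ} {A : ℕ → ℕ → Prop} {f : ℕ → Fin k} (a b : Fin k) :
      CW k V A f →
      CW k V A (fun x => if f x = a then b else f x)


section Aux

lemma dco_ne {V : Finset ℕ} {A : ℕ → ℕ → Prop} (h : DCo V A) : V.Nonempty := by
  induction h with
  | single v => exact ⟨v, Finset.mem_singleton_self v⟩
  | union _ _ _ ih1 _ => exact ih1.mono Finset.subset_union_left
  | series _ _ _ ih1 _ => exact ih1.mono Finset.subset_union_left
  | order _ _ _ ih1 _ => exact ih1.mono Finset.subset_union_left

lemma dco_sub {V : Finset ℕ} {A : ℕ → ℕ → Prop} (h : DCo V A) :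
    ∀ ⦃x y⦄, A x y → x ∈ V ∧ y ∈ V ∧ x ≠ y := by
  induction h with
  | single v => intro x y hxy; exact hxy.elim
  | union d h1 h2 ih1 ih2 =>
    rintro x y (h | h)
    · exact ⟨Finset.mem_union_left _ (ih1 h).1, Finset.mem_union_left _ (ih1 h).2.1, (ih1 h).2.2⟩
    · exact ⟨Finset.mem_union_right _ (ih2 h).1, Finset.mem_union_right _ (ih2 h).2.1, (ih2 h).2.2⟩
  | series d h1 h2 ih1 ih2 =>
    rintro x y (h | h | ⟨hx, hy⟩ | ⟨hx, hy⟩)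
    · exact ⟨Finset.mem_union_left _ (ih1 h).1, Finset.mem_union_left _ (ih1 h).2.1, (ih1 h).2.2⟩
    · exact ⟨Finset.mem_union_right _ (ih2 h).1, Finset.mem_union_right _ (ih2 h).2.1, (ih2 h).2.2⟩
    · exact ⟨Finset.mem_union_left _ hx, Finset.mem_union_right _ hy,
        fun e => Finset.disjoint_left.mp d hx (e ▸ hy)⟩
    · exact ⟨Finset.mem_union_right _ hx, Finset.mem_union_left _ hy,
        fun e => Finset.disjoint_left.mp d hy (e ▸ hx)⟩
  | order d h1 h2 ih1 ih2 =>
    rintro x y (h | h | ⟨hx, hy⟩)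
    · exact ⟨Finset.mem_union_left _ (ih1 h).1, Finset.mem_union_left _ (ih1 h).2.1, (ih1 h).2.2⟩
    · exact ⟨Finset.mem_union_right _ (ih2 h).1, Finset.mem_union_right _ (ih2 h).2.1, (ih2 h).2.2⟩
    · exact ⟨Finset.mem_union_left _ hx, Finset.mem_union_right _ hy,
        fun e => Finset.disjoint_left.mp d hx (e ▸ hy)⟩

lemma dco_iff {V : Finset ℕ} {A B : ℕ → ℕ → Prop} (h : DCo V A)
    (hAB : ∀ x y, A x y ↔ B x y) : DCo V B := by
  have hE : A = B := funext fun x => funext fun y => propext (hAB x y)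
  exact hE ▸ h

lemma dco_card1 {V : Finset ℕ} {A : ℕ → ℕ → Prop} (h : DCo V A) (hc : V.card = 1) :
    A = fun _ _ => False := by
  funext x y
  simp only [eq_iff_iff, iff_false]
  intro hxy
  obtain ⟨hx, hy, hne⟩ := dco_sub h hxy
  exact hne (Finset.card_le_one.mp hc.le x hx y hy)

lemma dco_del {V : Finset ℕ} {A : ℕ → ℕ → Prop} (h : DCo V A) :
    ∀ y, (V.erase y).Nonempty →
      DCo (V.erase y) (fun a b => A a b ∧ a ≠ y ∧ b ≠ y) := by
  induction h with
  | single v =>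
    intro y hne
    have hyv : y ≠ v := by
      rintro rfl; simp at hne
    have hset : ({v} : Finset ℕ).erase y = {v} :=
      Finset.erase_eq_of_notMem (by simpa using hyv)
    rw [hset]
    refine dco_iff (DCo.single v) ?_
    intro a b
    constructor
    · intro h; exact h.elim
    · intro h; exact h.1
  | @union V₁ V₂ A₁ A₂ d h1 h2 ih1 ih2 =>
    intro y hne
    have c1 := dco_sub h1
    have c2 := dco_sub h2
    by_cases hy1 : y ∈ V₁
    · have hy2 : y ∉ V₂ := Finset.disjoint_left.mp d hy1
      have hset : (V₁ ∪ V₂).erase y = V₁.erase y ∪ V₂ := by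
        ext a
        simp only [Finset.mem_erase, Finset.mem_union]
        constructor
        · rintro ⟨hay, h | h⟩
          · exact Or.inl ⟨hay, h⟩
          · exact Or.inr h
        · rintro (⟨hay, h⟩ | h)
          · exact ⟨hay, Or.inl h⟩
          · exact ⟨fun e => hy2 (e ▸ h), Or.inr h⟩
      rw [hset]
      by_cases hne1 : (V₁.erase y).Nonempty
      · refine dco_iff (DCo.union (Finset.disjoint_of_subset_left (Finset.erase_subset _ _) d)
          (ih1 y hne1) h2) ?_
        intro a b
        have k2 : A₂ a b → a ≠ y ∧ b ≠ y := fun hab =>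
          ⟨fun e => hy2 (e ▸ (c2 hab).1), fun e => hy2 (e ▸ (c2 hab).2.1)⟩
        constructor
        · rintro (⟨h, ha, hb⟩ | h)
          · exact ⟨Or.inl h, ha, hb⟩
          · exact ⟨Or.inr h, (k2 h).1, (k2 h).2⟩
        · rintro ⟨h | h, hay, hby⟩
          · exact Or.inl ⟨h, hay, hby⟩
          · exact Or.inr h
      · have hE : V₁.erase y = ∅ := Finset.not_nonempty_iff_eq_empty.mp hne1
        have hV1 : V₁ = {y} := by
          have hsub : V₁ ⊆ {y} := by
            intro a ha
            by_contra hay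
            have : a ∈ V₁.erase y := Finset.mem_erase.mpr ⟨by simpa using hay, ha⟩
            rw [hE] at this; simp at this
          exact Finset.Subset.antisymm hsub (Finset.singleton_subset_iff.mpr hy1)
        rw [hE, Finset.empty_union]
        refine dco_iff h2 ?_
        intro a b
        have k1 : ¬ A₁ a b := by
          intro hab
          have ha : a = y := by have := (c1 hab).1; rw [hV1] at this; simpa using this
          have hb : b = y := by have := (c1 hab).2.1; rw [hV1] at this; simpa using this
          exact (c1 hab).2.2 (ha.trans hb.symm)
        have k2 : A₂ a b → a ≠ y ∧ b ≠ y := fun hab =>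
          ⟨fun e => hy2 (e ▸ (c2 hab).1), fun e => hy2 (e ▸ (c2 hab).2.1)⟩
        constructor
        · intro h; exact ⟨Or.inr h, (k2 h).1, (k2 h).2⟩
        · rintro ⟨h | h, hay, hby⟩
          · exact absurd h k1
          · exact h
    · by_cases hy2 : y ∈ V₂
      · have hset : (V₁ ∪ V₂).erase y = V₁ ∪ V₂.erase y := by
          ext a
          simp only [Finset.mem_erase, Finset.mem_union]
          constructor
          · rintro ⟨hay, h | h⟩
            · exact Or.inl h
            · exact Or.inr ⟨hay, h⟩
          · rintro (h | ⟨hay, h⟩)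
            · exact ⟨fun e => hy1 (e ▸ h), Or.inl h⟩
            · exact ⟨hay, Or.inr h⟩
        rw [hset]
        by_cases hne2 : (V₂.erase y).Nonempty
        · refine dco_iff (DCo.union (Finset.disjoint_of_subset_right (Finset.erase_subset _ _) d)
            h1 (ih2 y hne2)) ?_
          intro a b
          have k1 : A₁ a b → a ≠ y ∧ b ≠ y := fun hab =>
            ⟨fun e => hy1 (e ▸ (c1 hab).1), fun e => hy1 (e ▸ (c1 hab).2.1)⟩
          constructor
          · rintro (h | ⟨h, ha, hb⟩)
            · exact ⟨Or.inl h, (k1 h).1, (k1 h).2⟩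
            · exact ⟨Or.inr h, ha, hb⟩
          · rintro ⟨h | h, hay, hby⟩
            · exact Or.inl h
            · exact Or.inr ⟨h, hay, hby⟩
        · have hE : V₂.erase y = ∅ := Finset.not_nonempty_iff_eq_empty.mp hne2
          have hV2 : V₂ = {y} := by
            have hsub : V₂ ⊆ {y} := by
              intro a ha
              by_contra hay
              have : a ∈ V₂.erase y := Finset.mem_erase.mpr ⟨by simpa using hay, ha⟩
              rw [hE] at this; simp at this
            exact Finset.Subset.antisymm hsub (Finset.singleton_subset_iff.mpr hy2)
          rw [hE, Finset.union_empty]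
          refine dco_iff h1 ?_
          intro a b
          have k2 : ¬ A₂ a b := by
            intro hab
            have ha : a = y := by have := (c2 hab).1; rw [hV2] at this; simpa using this
            have hb : b = y := by have := (c2 hab).2.1; rw [hV2] at this; simpa using this
            exact (c2 hab).2.2 (ha.trans hb.symm)
          have k1 : A₁ a b → a ≠ y ∧ b ≠ y := fun hab =>
            ⟨fun e => hy1 (e ▸ (c1 hab).1), fun e => hy1 (e ▸ (c1 hab).2.1)⟩
          constructor
          · intro h; exact ⟨Or.inl h, (k1 h).1, (k1 h).2⟩
          · rintro ⟨h | h, hay, hby⟩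
            · exact h
            · exact absurd h k2
      · have hyV : y ∉ V₁ ∪ V₂ := by
          intro hm
          exact (Finset.mem_union.mp hm).elim hy1 hy2
        rw [Finset.erase_eq_of_notMem hyV]
        have S := DCo.union d h1 h2
        refine dco_iff S ?_
        intro a b
        have cS := dco_sub S
        constructor
        · intro h
          obtain ⟨ha, hb, _⟩ := cS h
          exact ⟨h, fun e => hyV (e ▸ ha), fun e => hyV (e ▸ hb)⟩
        · exact fun h => h.1
  | @series V₁ V₂ A₁ A₂ d h1 h2 ih1 ih2 =>
    intro y hne
    have c1 := dco_sub h1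
    have c2 := dco_sub h2
    by_cases hy1 : y ∈ V₁
    · have hy2 : y ∉ V₂ := Finset.disjoint_left.mp d hy1
      have hset : (V₁ ∪ V₂).erase y = V₁.erase y ∪ V₂ := by
        ext a
        simp only [Finset.mem_erase, Finset.mem_union]
        constructor
        · rintro ⟨hay, h | h⟩
          · exact Or.inl ⟨hay, h⟩
          · exact Or.inr h
        · rintro (⟨hay, h⟩ | h)
          · exact ⟨hay, Or.inl h⟩
          · exact ⟨fun e => hy2 (e ▸ h), Or.inr h⟩
      rw [hset]
      by_cases hne1 : (V₁.erase y).Nonempty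
      · refine dco_iff (DCo.series (Finset.disjoint_of_subset_left (Finset.erase_subset _ _) d)
          (ih1 y hne1) h2) ?_
        intro a b
        have k2 : A₂ a b → a ≠ y ∧ b ≠ y := fun hab =>
          ⟨fun e => hy2 (e ▸ (c2 hab).1), fun e => hy2 (e ▸ (c2 hab).2.1)⟩
        have m2a : a ∈ V₂ → a ≠ y := fun h e => hy2 (e ▸ h)
        have m2b : b ∈ V₂ → b ≠ y := fun h e => hy2 (e ▸ h)
        constructor
        · rintro (⟨h, ha, hb⟩ | h | ⟨ha, hb⟩ | ⟨ha, hb⟩)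
          · exact ⟨Or.inl h, ha, hb⟩
          · exact ⟨Or.inr (Or.inl h), (k2 h).1, (k2 h).2⟩
          · have ha' := Finset.mem_erase.mp ha
            exact ⟨Or.inr (Or.inr (Or.inl ⟨ha'.2, hb⟩)), ha'.1, m2b hb⟩
          · have hb' := Finset.mem_erase.mp hb
            exact ⟨Or.inr (Or.inr (Or.inr ⟨ha, hb'.2⟩)), m2a ha, hb'.1⟩
        · rintro ⟨h | h | ⟨ha, hb⟩ | ⟨ha, hb⟩, hay, hby⟩
          · exact Or.inl ⟨h, hay, hby⟩
          · exact Or.inr (Or.inl h)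
          · exact Or.inr (Or.inr (Or.inl ⟨Finset.mem_erase.mpr ⟨hay, ha⟩, hb⟩))
          · exact Or.inr (Or.inr (Or.inr ⟨ha, Finset.mem_erase.mpr ⟨hby, hb⟩⟩))
      · have hE : V₁.erase y = ∅ := Finset.not_nonempty_iff_eq_empty.mp hne1
        have hV1 : V₁ = {y} := by
          have hsub : V₁ ⊆ {y} := by
            intro a ha
            by_contra hay
            have : a ∈ V₁.erase y := Finset.mem_erase.mpr ⟨by simpa using hay, ha⟩
            rw [hE] at this; simp at this
          exact Finset.Subset.antisymm hsub (Finset.singleton_subset_iff.mpr hy1)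
        rw [hE, Finset.empty_union]
        refine dco_iff h2 ?_
        intro a b
        have k1 : ¬ A₁ a b := by
          intro hab
          have ha : a = y := by have := (c1 hab).1; rw [hV1] at this; simpa using this
          have hb : b = y := by have := (c1 hab).2.1; rw [hV1] at this; simpa using this
          exact (c1 hab).2.2 (ha.trans hb.symm)
        have k2 : A₂ a b → a ≠ y ∧ b ≠ y := fun hab =>
          ⟨fun e => hy2 (e ▸ (c2 hab).1), fun e => hy2 (e ▸ (c2 hab).2.1)⟩
        have m1a : a ∈ V₁ → a = y := by rw [hV1]; simp
        have m1b : b ∈ V₁ → b = y := by rw [hV1]; simp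
        constructor
        · intro h; exact ⟨Or.inr (Or.inl h), (k2 h).1, (k2 h).2⟩
        · rintro ⟨h | h | ⟨ha, hb⟩ | ⟨ha, hb⟩, hay, hby⟩
          · exact absurd h k1
          · exact h
          · exact absurd (m1a ha) hay
          · exact absurd (m1b hb) hby
    · by_cases hy2 : y ∈ V₂
      · have hset : (V₁ ∪ V₂).erase y = V₁ ∪ V₂.erase y := by
          ext a
          simp only [Finset.mem_erase, Finset.mem_union]
          constructor
          · rintro ⟨hay, h | h⟩
            · exact Or.inl h
            · exact Or.inr ⟨hay, h⟩
          · rintro (h | ⟨hay, h⟩)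
            · exact ⟨fun e => hy1 (e ▸ h), Or.inl h⟩
            · exact ⟨hay, Or.inr h⟩
        rw [hset]
        by_cases hne2 : (V₂.erase y).Nonempty
        · refine dco_iff (DCo.series (Finset.disjoint_of_subset_right (Finset.erase_subset _ _) d)
            h1 (ih2 y hne2)) ?_
          intro a b
          have k1 : A₁ a b → a ≠ y ∧ b ≠ y := fun hab =>
            ⟨fun e => hy1 (e ▸ (c1 hab).1), fun e => hy1 (e ▸ (c1 hab).2.1)⟩
          have m1a : a ∈ V₁ → a ≠ y := fun h e => hy1 (e ▸ h)
          have m1b : b ∈ V₁ → b ≠ y := fun h e => hy1 (e ▸ h)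
          constructor
          · rintro (h | ⟨h, ha, hb⟩ | ⟨ha, hb⟩ | ⟨ha, hb⟩)
            · exact ⟨Or.inl h, (k1 h).1, (k1 h).2⟩
            · exact ⟨Or.inr (Or.inl h), ha, hb⟩
            · have hb' := Finset.mem_erase.mp hb
              exact ⟨Or.inr (Or.inr (Or.inl ⟨ha, hb'.2⟩)), m1a ha, hb'.1⟩
            · have ha' := Finset.mem_erase.mp ha
              exact ⟨Or.inr (Or.inr (Or.inr ⟨ha'.2, hb⟩)), ha'.1, m1b hb⟩
          · rintro ⟨h | h | ⟨ha, hb⟩ | ⟨ha, hb⟩, hay, hby⟩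
            · exact Or.inl h
            · exact Or.inr (Or.inl ⟨h, hay, hby⟩)
            · exact Or.inr (Or.inr (Or.inl ⟨ha, Finset.mem_erase.mpr ⟨hby, hb⟩⟩))
            · exact Or.inr (Or.inr (Or.inr ⟨Finset.mem_erase.mpr ⟨hay, ha⟩, hb⟩))
        · have hE : V₂.erase y = ∅ := Finset.not_nonempty_iff_eq_empty.mp hne2
          have hV2 : V₂ = {y} := by
            have hsub : V₂ ⊆ {y} := by
              intro a ha
              by_contra hay
              have : a ∈ V₂.erase y := Finset.mem_erase.mpr ⟨by simpa using hay, ha⟩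
              rw [hE] at this; simp at this
            exact Finset.Subset.antisymm hsub (Finset.singleton_subset_iff.mpr hy2)
          rw [hE, Finset.union_empty]
          refine dco_iff h1 ?_
          intro a b
          have k2 : ¬ A₂ a b := by
            intro hab
            have ha : a = y := by have := (c2 hab).1; rw [hV2] at this; simpa using this
            have hb : b = y := by have := (c2 hab).2.1; rw [hV2] at this; simpa using this
            exact (c2 hab).2.2 (ha.trans hb.symm)
          have k1 : A₁ a b → a ≠ y ∧ b ≠ y := fun hab =>
            ⟨fun e => hy1 (e ▸ (c1 hab).1), fun e => hy1 (e ▸ (c1 hab).2.1)⟩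
          have m2a : a ∈ V₂ → a = y := by rw [hV2]; simp
          have m2b : b ∈ V₂ → b = y := by rw [hV2]; simp
          constructor
          · intro h; exact ⟨Or.inl h, (k1 h).1, (k1 h).2⟩
          · rintro ⟨h | h | ⟨ha, hb⟩ | ⟨ha, hb⟩, hay, hby⟩
            · exact h
            · exact absurd h k2
            · exact absurd (m2b hb) hby
            · exact absurd (m2a ha) hay
      · have hyV : y ∉ V₁ ∪ V₂ := by
          intro hm
          exact (Finset.mem_union.mp hm).elim hy1 hy2
        rw [Finset.erase_eq_of_notMem hyV]
        have S := DCo.series d h1 h2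
        refine dco_iff S ?_
        intro a b
        have cS := dco_sub S
        constructor
        · intro h
          obtain ⟨ha, hb, _⟩ := cS h
          exact ⟨h, fun e => hyV (e ▸ ha), fun e => hyV (e ▸ hb)⟩
        · exact fun h => h.1
  | @order V₁ V₂ A₁ A₂ d h1 h2 ih1 ih2 =>
    intro y hne
    have c1 := dco_sub h1
    have c2 := dco_sub h2
    by_cases hy1 : y ∈ V₁
    · have hy2 : y ∉ V₂ := Finset.disjoint_left.mp d hy1
      have hset : (V₁ ∪ V₂).erase y = V₁.erase y ∪ V₂ := by
        ext a
        simp only [Finset.mem_erase, Finset.mem_union]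
        constructor
        · rintro ⟨hay, h | h⟩
          · exact Or.inl ⟨hay, h⟩
          · exact Or.inr h
        · rintro (⟨hay, h⟩ | h)
          · exact ⟨hay, Or.inl h⟩
          · exact ⟨fun e => hy2 (e ▸ h), Or.inr h⟩
      rw [hset]
      by_cases hne1 : (V₁.erase y).Nonempty
      · refine dco_iff (DCo.order (Finset.disjoint_of_subset_left (Finset.erase_subset _ _) d)
          (ih1 y hne1) h2) ?_
        intro a b
        have k2 : A₂ a b → a ≠ y ∧ b ≠ y := fun hab =>
          ⟨fun e => hy2 (e ▸ (c2 hab).1), fun e => hy2 (e ▸ (c2 hab).2.1)⟩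
        have m2b : b ∈ V₂ → b ≠ y := fun h e => hy2 (e ▸ h)
        constructor
        · rintro (⟨h, ha, hb⟩ | h | ⟨ha, hb⟩)
          · exact ⟨Or.inl h, ha, hb⟩
          · exact ⟨Or.inr (Or.inl h), (k2 h).1, (k2 h).2⟩
          · have ha' := Finset.mem_erase.mp ha
            exact ⟨Or.inr (Or.inr ⟨ha'.2, hb⟩), ha'.1, m2b hb⟩
        · rintro ⟨h | h | ⟨ha, hb⟩, hay, hby⟩
          · exact Or.inl ⟨h, hay, hby⟩
          · exact Or.inr (Or.inl h)
          · exact Or.inr (Or.inr ⟨Finset.mem_erase.mpr ⟨hay, ha⟩, hb⟩)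
      · have hE : V₁.erase y = ∅ := Finset.not_nonempty_iff_eq_empty.mp hne1
        have hV1 : V₁ = {y} := by
          have hsub : V₁ ⊆ {y} := by
            intro a ha
            by_contra hay
            have : a ∈ V₁.erase y := Finset.mem_erase.mpr ⟨by simpa using hay, ha⟩
            rw [hE] at this; simp at this
          exact Finset.Subset.antisymm hsub (Finset.singleton_subset_iff.mpr hy1)
        rw [hE, Finset.empty_union]
        refine dco_iff h2 ?_
        intro a b
        have k1 : ¬ A₁ a b := by
          intro hab
          have ha : a = y := by have := (c1 hab).1; rw [hV1] at this; simpa using this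
          have hb : b = y := by have := (c1 hab).2.1; rw [hV1] at this; simpa using this
          exact (c1 hab).2.2 (ha.trans hb.symm)
        have k2 : A₂ a b → a ≠ y ∧ b ≠ y := fun hab =>
          ⟨fun e => hy2 (e ▸ (c2 hab).1), fun e => hy2 (e ▸ (c2 hab).2.1)⟩
        have m1a : a ∈ V₁ → a = y := by rw [hV1]; simp
        constructor
        · intro h; exact ⟨Or.inr (Or.inl h), (k2 h).1, (k2 h).2⟩
        · rintro ⟨h | h | ⟨ha, hb⟩, hay, hby⟩
          · exact absurd h k1
          · exact h
          · exact absurd (m1a ha) hay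
    · by_cases hy2 : y ∈ V₂
      · have hset : (V₁ ∪ V₂).erase y = V₁ ∪ V₂.erase y := by
          ext a
          simp only [Finset.mem_erase, Finset.mem_union]
          constructor
          · rintro ⟨hay, h | h⟩
            · exact Or.inl h
            · exact Or.inr ⟨hay, h⟩
          · rintro (h | ⟨hay, h⟩)
            · exact ⟨fun e => hy1 (e ▸ h), Or.inl h⟩
            · exact ⟨hay, Or.inr h⟩
        rw [hset]
        by_cases hne2 : (V₂.erase y).Nonempty
        · refine dco_iff (DCo.order (Finset.disjoint_of_subset_right (Finset.erase_subset _ _) d)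
            h1 (ih2 y hne2)) ?_
          intro a b
          have k1 : A₁ a b → a ≠ y ∧ b ≠ y := fun hab =>
            ⟨fun e => hy1 (e ▸ (c1 hab).1), fun e => hy1 (e ▸ (c1 hab).2.1)⟩
          have m1a : a ∈ V₁ → a ≠ y := fun h e => hy1 (e ▸ h)
          constructor
          · rintro (h | ⟨h, ha, hb⟩ | ⟨ha, hb⟩)
            · exact ⟨Or.inl h, (k1 h).1, (k1 h).2⟩
            · exact ⟨Or.inr (Or.inl h), ha, hb⟩
            · have hb' := Finset.mem_erase.mp hb
              exact ⟨Or.inr (Or.inr ⟨ha, hb'.2⟩), m1a ha, hb'.1⟩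
          · rintro ⟨h | h | ⟨ha, hb⟩, hay, hby⟩
            · exact Or.inl h
            · exact Or.inr (Or.inl ⟨h, hay, hby⟩)
            · exact Or.inr (Or.inr ⟨ha, Finset.mem_erase.mpr ⟨hby, hb⟩⟩)
        · have hE : V₂.erase y = ∅ := Finset.not_nonempty_iff_eq_empty.mp hne2
          have hV2 : V₂ = {y} := by
            have hsub : V₂ ⊆ {y} := by
              intro a ha
              by_contra hay
              have : a ∈ V₂.erase y := Finset.mem_erase.mpr ⟨by simpa using hay, ha⟩
              rw [hE] at this; simp at this
            exact Finset.Subset.antisymm hsub (Finset.singleton_subset_iff.mpr hy2)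
          rw [hE, Finset.union_empty]
          refine dco_iff h1 ?_
          intro a b
          have k2 : ¬ A₂ a b := by
            intro hab
            have ha : a = y := by have := (c2 hab).1; rw [hV2] at this; simpa using this
            have hb : b = y := by have := (c2 hab).2.1; rw [hV2] at this; simpa using this
            exact (c2 hab).2.2 (ha.trans hb.symm)
          have k1 : A₁ a b → a ≠ y ∧ b ≠ y := fun hab =>
            ⟨fun e => hy1 (e ▸ (c1 hab).1), fun e => hy1 (e ▸ (c1 hab).2.1)⟩
          have m2b : b ∈ V₂ → b = y := by rw [hV2]; simp
          constructor
          · intro h; exact ⟨Or.inl h, (k1 h).1, (k1 h).2⟩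
          · rintro ⟨h | h | ⟨ha, hb⟩, hay, hby⟩
            · exact h
            · exact absurd h k2
            · exact absurd (m2b hb) hby
      · have hyV : y ∉ V₁ ∪ V₂ := by
          intro hm
          exact (Finset.mem_union.mp hm).elim hy1 hy2
        rw [Finset.erase_eq_of_notMem hyV]
        have S := DCo.order d h1 h2
        refine dco_iff S ?_
        intro a b
        have cS := dco_sub S
        constructor
        · intro h
          obtain ⟨ha, hb, _⟩ := cS h
          exact ⟨h, fun e => hyV (e ▸ ha), fun e => hyV (e ▸ hb)⟩
        · exact fun h => h.1

lemma dco_twins {V : Finset ℕ} {A : ℕ → ℕ → Prop} (h : DCo V A) :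
    2 ≤ V.card →
    ∃ x ∈ V, ∃ y ∈ V, x ≠ y ∧
      ∀ w, w ≠ x → w ≠ y → ((A w x ↔ A w y) ∧ (A x w ↔ A y w)) := by
  induction h with
  | single v => intro hc; simp at hc
  | @union V₁ V₂ A₁ A₂ d h1 h2 ih1 ih2 =>
    intro _
    have c1 := dco_sub h1
    have c2 := dco_sub h2
    by_cases h1c : 2 ≤ V₁.card
    · obtain ⟨x, hx, y, hy, hxy, htw⟩ := ih1 h1c
      refine ⟨x, Finset.mem_union_left _ hx, y, Finset.mem_union_left _ hy, hxy, ?_⟩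
      intro w hwx hwy
      obtain ⟨e1, e2⟩ := htw w hwx hwy
      have nx : ¬ A₂ w x := fun h => Finset.disjoint_left.mp d hx (c2 h).2.1
      have ny : ¬ A₂ w y := fun h => Finset.disjoint_left.mp d hy (c2 h).2.1
      have nx' : ¬ A₂ x w := fun h => Finset.disjoint_left.mp d hx (c2 h).1
      have ny' : ¬ A₂ y w := fun h => Finset.disjoint_left.mp d hy (c2 h).1
      constructor
      · exact ⟨fun h => h.elim (fun h => Or.inl (e1.mp h)) (fun h => absurd h nx),
          fun h => h.elim (fun h => Or.inl (e1.mpr h)) (fun h => absurd h ny)⟩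
      · exact ⟨fun h => h.elim (fun h => Or.inl (e2.mp h)) (fun h => absurd h nx'),
          fun h => h.elim (fun h => Or.inl (e2.mpr h)) (fun h => absurd h ny')⟩
    · by_cases h2c : 2 ≤ V₂.card
      · obtain ⟨x, hx, y, hy, hxy, htw⟩ := ih2 h2c
        refine ⟨x, Finset.mem_union_right _ hx, y, Finset.mem_union_right _ hy, hxy, ?_⟩
        intro w hwx hwy
        obtain ⟨e1, e2⟩ := htw w hwx hwy
        have nx : ¬ A₁ w x := fun h => Finset.disjoint_right.mp d hx (c1 h).2.1
        have ny : ¬ A₁ w y := fun h => Finset.disjoint_right.mp d hy (c1 h).2.1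
        have nx' : ¬ A₁ x w := fun h => Finset.disjoint_right.mp d hx (c1 h).1
        have ny' : ¬ A₁ y w := fun h => Finset.disjoint_right.mp d hy (c1 h).1
        constructor
        · exact ⟨fun h => h.elim (fun h => absurd h nx) (fun h => Or.inr (e1.mp h)),
            fun h => h.elim (fun h => absurd h ny) (fun h => Or.inr (e1.mpr h))⟩
        · exact ⟨fun h => h.elim (fun h => absurd h nx') (fun h => Or.inr (e2.mp h)),
            fun h => h.elim (fun h => absurd h ny') (fun h => Or.inr (e2.mpr h))⟩
      · have p1 : 0 < V₁.card := Finset.card_pos.mpr (dco_ne h1)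
        have p2 : 0 < V₂.card := Finset.card_pos.mpr (dco_ne h2)
        have e1 : V₁.card = 1 := by omega
        have e2 : V₂.card = 1 := by omega
        obtain ⟨a, rfl⟩ := Finset.card_eq_one.mp e1
        obtain ⟨b, rfl⟩ := Finset.card_eq_one.mp e2
        have hab : a ≠ b := by
          intro e; subst e
          exact absurd (Finset.mem_singleton_self a)
            (Finset.disjoint_left.mp d (Finset.mem_singleton_self a))
        have k1 : ∀ p q, ¬ A₁ p q := fun p q hpq => (c1 hpq).2.2
          ((Finset.mem_singleton.mp (c1 hpq).1).trans (Finset.mem_singleton.mp (c1 hpq).2.1).symm)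
        have k2 : ∀ p q, ¬ A₂ p q := fun p q hpq => (c2 hpq).2.2
          ((Finset.mem_singleton.mp (c2 hpq).1).trans (Finset.mem_singleton.mp (c2 hpq).2.1).symm)
        refine ⟨a, Finset.mem_union_left _ (Finset.mem_singleton_self a),
          b, Finset.mem_union_right _ (Finset.mem_singleton_self b), hab, ?_⟩
        intro w hwa hwb
        simp [k1, k2, Finset.mem_singleton, hwa, hwb]
  | @series V₁ V₂ A₁ A₂ d h1 h2 ih1 ih2 =>
    intro _
    have c1 := dco_sub h1
    have c2 := dco_sub h2
    by_cases h1c : 2 ≤ V₁.card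
    · obtain ⟨x, hx, y, hy, hxy, htw⟩ := ih1 h1c
      have hx2 : x ∉ V₂ := Finset.disjoint_left.mp d hx
      have hy2 : y ∉ V₂ := Finset.disjoint_left.mp d hy
      refine ⟨x, Finset.mem_union_left _ hx, y, Finset.mem_union_left _ hy, hxy, ?_⟩
      intro w hwx hwy
      obtain ⟨e1, e2⟩ := htw w hwx hwy
      have nx : ¬ A₂ w x := fun h => hx2 (c2 h).2.1
      have ny : ¬ A₂ w y := fun h => hy2 (c2 h).2.1
      have nx' : ¬ A₂ x w := fun h => hx2 (c2 h).1
      have ny' : ¬ A₂ y w := fun h => hy2 (c2 h).1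
      constructor
      · constructor
        · rintro (h | h | ⟨hw, hx'⟩ | ⟨hw, _⟩)
          · exact Or.inl (e1.mp h)
          · exact absurd h nx
          · exact absurd hx' hx2
          · exact Or.inr (Or.inr (Or.inr ⟨hw, hy⟩))
        · rintro (h | h | ⟨hw, hy'⟩ | ⟨hw, _⟩)
          · exact Or.inl (e1.mpr h)
          · exact absurd h ny
          · exact absurd hy' hy2
          · exact Or.inr (Or.inr (Or.inr ⟨hw, hx⟩))
      · constructor
        · rintro (h | h | ⟨_, hw⟩ | ⟨hx', hw⟩)
          · exact Or.inl (e2.mp h)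
          · exact absurd h nx'
          · exact Or.inr (Or.inr (Or.inl ⟨hy, hw⟩))
          · exact absurd hx' hx2
        · rintro (h | h | ⟨_, hw⟩ | ⟨hy', hw⟩)
          · exact Or.inl (e2.mpr h)
          · exact absurd h ny'
          · exact Or.inr (Or.inr (Or.inl ⟨hx, hw⟩))
          · exact absurd hy' hy2
    · by_cases h2c : 2 ≤ V₂.card
      · obtain ⟨x, hx, y, hy, hxy, htw⟩ := ih2 h2c
        have hx1 : x ∉ V₁ := Finset.disjoint_right.mp d hx
        have hy1 : y ∉ V₁ := Finset.disjoint_right.mp d hy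
        refine ⟨x, Finset.mem_union_right _ hx, y, Finset.mem_union_right _ hy, hxy, ?_⟩
        intro w hwx hwy
        obtain ⟨e1, e2⟩ := htw w hwx hwy
        have nx : ¬ A₁ w x := fun h => hx1 (c1 h).2.1
        have ny : ¬ A₁ w y := fun h => hy1 (c1 h).2.1
        have nx' : ¬ A₁ x w := fun h => hx1 (c1 h).1
        have ny' : ¬ A₁ y w := fun h => hy1 (c1 h).1
        constructor
        · constructor
          · rintro (h | h | ⟨hw, _⟩ | ⟨hw, hx'⟩)
            · exact absurd h nx
            · exact Or.inr (Or.inl (e1.mp h))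
            · exact Or.inr (Or.inr (Or.inl ⟨hw, hy⟩))
            · exact absurd hx' hx1
          · rintro (h | h | ⟨hw, _⟩ | ⟨hw, hy'⟩)
            · exact absurd h ny
            · exact Or.inr (Or.inl (e1.mpr h))
            · exact Or.inr (Or.inr (Or.inl ⟨hw, hx⟩))
            · exact absurd hy' hy1
        · constructor
          · rintro (h | h | ⟨hx', hw⟩ | ⟨_, hw⟩)
            · exact absurd h nx'
            · exact Or.inr (Or.inl (e2.mp h))
            · exact absurd hx' hx1
            · exact Or.inr (Or.inr (Or.inr ⟨hy, hw⟩))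
          · rintro (h | h | ⟨hy', hw⟩ | ⟨_, hw⟩)
            · exact absurd h ny'
            · exact Or.inr (Or.inl (e2.mpr h))
            · exact absurd hy' hy1
            · exact Or.inr (Or.inr (Or.inr ⟨hx, hw⟩))
      · have p1 : 0 < V₁.card := Finset.card_pos.mpr (dco_ne h1)
        have p2 : 0 < V₂.card := Finset.card_pos.mpr (dco_ne h2)
        have e1 : V₁.card = 1 := by omega
        have e2 : V₂.card = 1 := by omega
        obtain ⟨a, rfl⟩ := Finset.card_eq_one.mp e1
        obtain ⟨b, rfl⟩ := Finset.card_eq_one.mp e2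
        have hab : a ≠ b := by
          intro e; subst e
          exact absurd (Finset.mem_singleton_self a)
            (Finset.disjoint_left.mp d (Finset.mem_singleton_self a))
        have k1 : ∀ p q, ¬ A₁ p q := fun p q hpq => (c1 hpq).2.2
          ((Finset.mem_singleton.mp (c1 hpq).1).trans (Finset.mem_singleton.mp (c1 hpq).2.1).symm)
        have k2 : ∀ p q, ¬ A₂ p q := fun p q hpq => (c2 hpq).2.2
          ((Finset.mem_singleton.mp (c2 hpq).1).trans (Finset.mem_singleton.mp (c2 hpq).2.1).symm)
        refine ⟨a, Finset.mem_union_left _ (Finset.mem_singleton_self a),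
          b, Finset.mem_union_right _ (Finset.mem_singleton_self b), hab, ?_⟩
        intro w hwa hwb
        simp [k1, k2, Finset.mem_singleton, hwa, hwb, hab]
  | @order V₁ V₂ A₁ A₂ d h1 h2 ih1 ih2 =>
    intro _
    have c1 := dco_sub h1
    have c2 := dco_sub h2
    by_cases h1c : 2 ≤ V₁.card
    · obtain ⟨x, hx, y, hy, hxy, htw⟩ := ih1 h1c
      have hx2 : x ∉ V₂ := Finset.disjoint_left.mp d hx
      have hy2 : y ∉ V₂ := Finset.disjoint_left.mp d hy
      refine ⟨x, Finset.mem_union_left _ hx, y, Finset.mem_union_left _ hy, hxy, ?_⟩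
      intro w hwx hwy
      obtain ⟨e1, e2⟩ := htw w hwx hwy
      have nx : ¬ A₂ w x := fun h => hx2 (c2 h).2.1
      have ny : ¬ A₂ w y := fun h => hy2 (c2 h).2.1
      have nx' : ¬ A₂ x w := fun h => hx2 (c2 h).1
      have ny' : ¬ A₂ y w := fun h => hy2 (c2 h).1
      constructor
      · constructor
        · rintro (h | h | ⟨hw, hx'⟩)
          · exact Or.inl (e1.mp h)
          · exact absurd h nx
          · exact absurd hx' hx2
        · rintro (h | h | ⟨hw, hy'⟩)
          · exact Or.inl (e1.mpr h)
          · exact absurd h ny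
          · exact absurd hy' hy2
      · constructor
        · rintro (h | h | ⟨_, hw⟩)
          · exact Or.inl (e2.mp h)
          · exact absurd h nx'
          · exact Or.inr (Or.inr ⟨hy, hw⟩)
        · rintro (h | h | ⟨_, hw⟩)
          · exact Or.inl (e2.mpr h)
          · exact absurd h ny'
          · exact Or.inr (Or.inr ⟨hx, hw⟩)
    · by_cases h2c : 2 ≤ V₂.card
      · obtain ⟨x, hx, y, hy, hxy, htw⟩ := ih2 h2c
        have hx1 : x ∉ V₁ := Finset.disjoint_right.mp d hx
        have hy1 : y ∉ V₁ := Finset.disjoint_right.mp d hy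
        refine ⟨x, Finset.mem_union_right _ hx, y, Finset.mem_union_right _ hy, hxy, ?_⟩
        intro w hwx hwy
        obtain ⟨e1, e2⟩ := htw w hwx hwy
        have nx : ¬ A₁ w x := fun h => hx1 (c1 h).2.1
        have ny : ¬ A₁ w y := fun h => hy1 (c1 h).2.1
        have nx' : ¬ A₁ x w := fun h => hx1 (c1 h).1
        have ny' : ¬ A₁ y w := fun h => hy1 (c1 h).1
        constructor
        · constructor
          · rintro (h | h | ⟨hw, _⟩)
            · exact absurd h nx
            · exact Or.inr (Or.inl (e1.mp h))
            · exact Or.inr (Or.inr ⟨hw, hy⟩)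
          · rintro (h | h | ⟨hw, _⟩)
            · exact absurd h ny
            · exact Or.inr (Or.inl (e1.mpr h))
            · exact Or.inr (Or.inr ⟨hw, hx⟩)
        · constructor
          · rintro (h | h | ⟨hx', hw⟩)
            · exact absurd h nx'
            · exact Or.inr (Or.inl (e2.mp h))
            · exact absurd hx' hx1
          · rintro (h | h | ⟨hy', hw⟩)
            · exact absurd h ny'
            · exact Or.inr (Or.inl (e2.mpr h))
            · exact absurd hy' hy1
      · have p1 : 0 < V₁.card := Finset.card_pos.mpr (dco_ne h1)
        have p2 : 0 < V₂.card := Finset.card_pos.mpr (dco_ne h2)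
        have e1 : V₁.card = 1 := by omega
        have e2 : V₂.card = 1 := by omega
        obtain ⟨a, rfl⟩ := Finset.card_eq_one.mp e1
        obtain ⟨b, rfl⟩ := Finset.card_eq_one.mp e2
        have hab : a ≠ b := by
          intro e; subst e
          exact absurd (Finset.mem_singleton_self a)
            (Finset.disjoint_left.mp d (Finset.mem_singleton_self a))
        have k1 : ∀ p q, ¬ A₁ p q := fun p q hpq => (c1 hpq).2.2
          ((Finset.mem_singleton.mp (c1 hpq).1).trans (Finset.mem_singleton.mp (c1 hpq).2.1).symm)
        have k2 : ∀ p q, ¬ A₂ p q := fun p q hpq => (c2 hpq).2.2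
          ((Finset.mem_singleton.mp (c2 hpq).1).trans (Finset.mem_singleton.mp (c2 hpq).2.1).symm)
        refine ⟨a, Finset.mem_union_left _ (Finset.mem_singleton_self a),
          b, Finset.mem_union_right _ (Finset.mem_singleton_self b), hab, ?_⟩
        intro w hwa hwb
        simp [k1, k2, Finset.mem_singleton, hwa, hwb, hab]

lemma dco_twin_closed {V : Finset ℕ} {A : ℕ → ℕ → Prop} (h : DCo V A) :
    ∀ v u (auv avu : Prop), v ∈ V → u ∉ V →
      DCo (insert u V) (twinArc A v u auv avu) := by
  induction h with
  | single w =>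
    intro v u auv avu hv hu
    have hvw : v = w := Finset.mem_singleton.mp hv
    subst hvw
    have huv : u ≠ v := by simpa using hu
    by_cases p1 : auv <;> by_cases p2 : avu
    · have dj : Disjoint ({u} : Finset ℕ) {v} := Finset.disjoint_singleton.mpr huv
      have T := DCo.series dj (DCo.single u) (DCo.single v)
      rw [← Finset.insert_eq] at T
      refine dco_iff T ?_
      intro x y
      simp only [twinArc, Finset.mem_singleton]
      tauto
    · have dj : Disjoint ({u} : Finset ℕ) {v} := Finset.disjoint_singleton.mpr huv
      have T := DCo.order dj (DCo.single u) (DCo.single v)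
      rw [← Finset.insert_eq] at T
      refine dco_iff T ?_
      intro x y
      simp only [twinArc, Finset.mem_singleton]
      tauto
    · have dj : Disjoint ({v} : Finset ℕ) {u} := Finset.disjoint_singleton.mpr huv.symm
      have T := DCo.order dj (DCo.single v) (DCo.single u)
      have hs : ({v} : Finset ℕ) ∪ {u} = insert u {v} := by
        ext a; simp [or_comm]
      rw [hs] at T
      refine dco_iff T ?_
      intro x y
      simp only [twinArc, Finset.mem_singleton]
      tauto
    · have dj : Disjoint ({u} : Finset ℕ) {v} := Finset.disjoint_singleton.mpr huv
      have T := DCo.union dj (DCo.single u) (DCo.single v)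
      rw [← Finset.insert_eq] at T
      refine dco_iff T ?_
      intro x y
      simp only [twinArc, Finset.mem_singleton]
      tauto
  | @union V₁ V₂ A₁ A₂ d h1 h2 ih1 ih2 =>
    intro v u auv avu hv hu
    have hu1 : u ∉ V₁ := fun h => hu (Finset.mem_union_left _ h)
    have hu2 : u ∉ V₂ := fun h => hu (Finset.mem_union_right _ h)
    have c1 := dco_sub h1
    have c2 := dco_sub h2
    rcases Finset.mem_union.mp hv with hv1 | hv2
    · have hv2' : v ∉ V₂ := Finset.disjoint_left.mp d hv1
      have T := DCo.union (Finset.disjoint_insert_left.mpr ⟨hu2, d⟩)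
        (ih1 v u auv avu hv1 hu1) h2
      rw [Finset.insert_union] at T
      refine dco_iff T ?_
      intro x y
      have n1 : ¬ A₂ v y := fun h => hv2' (c2 h).1
      have n2 : ¬ A₂ x v := fun h => hv2' (c2 h).2.1
      simp only [twinArc]
      constructor
      · rintro ((h | h | h | ⟨hx, h⟩ | ⟨hy, h⟩) | h)
        · exact Or.inl (Or.inl h)
        · exact Or.inr (Or.inl h)
        · exact Or.inr (Or.inr (Or.inl h))
        · exact Or.inr (Or.inr (Or.inr (Or.inl ⟨hx, Or.inl h⟩)))
        · exact Or.inr (Or.inr (Or.inr (Or.inr ⟨hy, Or.inl h⟩)))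
        · exact Or.inl (Or.inr h)
      · rintro ((h | h) | h | h | ⟨hx, h | h⟩ | ⟨hy, h | h⟩)
        · exact Or.inl (Or.inl h)
        · exact Or.inr h
        · exact Or.inl (Or.inr (Or.inl h))
        · exact Or.inl (Or.inr (Or.inr (Or.inl h)))
        · exact Or.inl (Or.inr (Or.inr (Or.inr (Or.inl ⟨hx, h⟩))))
        · exact absurd h n1
        · exact Or.inl (Or.inr (Or.inr (Or.inr (Or.inr ⟨hy, h⟩))))
        · exact absurd h n2
    · have hv1' : v ∉ V₁ := Finset.disjoint_right.mp d hv2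
      have T := DCo.union (Finset.disjoint_insert_right.mpr ⟨hu1, d⟩)
        h1 (ih2 v u auv avu hv2 hu2)
      rw [Finset.union_insert] at T
      refine dco_iff T ?_
      intro x y
      have n1 : ¬ A₁ v y := fun h => hv1' (c1 h).1
      have n2 : ¬ A₁ x v := fun h => hv1' (c1 h).2.1
      simp only [twinArc]
      constructor
      · rintro (h | (h | h | h | ⟨hx, h⟩ | ⟨hy, h⟩))
        · exact Or.inl (Or.inl h)
        · exact Or.inl (Or.inr h)
        · exact Or.inr (Or.inl h)
        · exact Or.inr (Or.inr (Or.inl h))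
        · exact Or.inr (Or.inr (Or.inr (Or.inl ⟨hx, Or.inr h⟩)))
        · exact Or.inr (Or.inr (Or.inr (Or.inr ⟨hy, Or.inr h⟩)))
      · rintro ((h | h) | h | h | ⟨hx, h | h⟩ | ⟨hy, h | h⟩)
        · exact Or.inl h
        · exact Or.inr (Or.inl h)
        · exact Or.inr (Or.inr (Or.inl h))
        · exact Or.inr (Or.inr (Or.inr (Or.inl h)))
        · exact absurd h n1
        · exact Or.inr (Or.inr (Or.inr (Or.inr (Or.inl ⟨hx, h⟩))))
        · exact absurd h n2
        · exact Or.inr (Or.inr (Or.inr (Or.inr (Or.inr ⟨hy, h⟩))))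
  | @series V₁ V₂ A₁ A₂ d h1 h2 ih1 ih2 =>
    intro v u auv avu hv hu
    have hu1 : u ∉ V₁ := fun h => hu (Finset.mem_union_left _ h)
    have hu2 : u ∉ V₂ := fun h => hu (Finset.mem_union_right _ h)
    have c1 := dco_sub h1
    have c2 := dco_sub h2
    rcases Finset.mem_union.mp hv with hv1 | hv2
    · have hv2' : v ∉ V₂ := Finset.disjoint_left.mp d hv1
      have T := DCo.series (Finset.disjoint_insert_left.mpr ⟨hu2, d⟩)
        (ih1 v u auv avu hv1 hu1) h2
      rw [Finset.insert_union] at T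
      refine dco_iff T ?_
      intro x y
      have n1 : ¬ A₂ v y := fun h => hv2' (c2 h).1
      have n2 : ¬ A₂ x v := fun h => hv2' (c2 h).2.1
      simp only [twinArc, Finset.mem_insert]
      constructor
      · rintro ((h | h | h | ⟨hx, h⟩ | ⟨hy, h⟩) | h | ⟨hx | hx, hy2⟩ | ⟨hx2, hy | hy⟩)
        · exact Or.inl (Or.inl h)
        · exact Or.inr (Or.inl h)
        · exact Or.inr (Or.inr (Or.inl h))
        · exact Or.inr (Or.inr (Or.inr (Or.inl ⟨hx, Or.inl h⟩)))
        · exact Or.inr (Or.inr (Or.inr (Or.inr ⟨hy, Or.inl h⟩)))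
        · exact Or.inl (Or.inr (Or.inl h))
        · exact Or.inr (Or.inr (Or.inr (Or.inl ⟨hx, Or.inr (Or.inr (Or.inl ⟨hv1, hy2⟩))⟩)))
        · exact Or.inl (Or.inr (Or.inr (Or.inl ⟨hx, hy2⟩)))
        · exact Or.inr (Or.inr (Or.inr (Or.inr ⟨hy, Or.inr (Or.inr (Or.inr ⟨hx2, hv1⟩))⟩)))
        · exact Or.inl (Or.inr (Or.inr (Or.inr ⟨hx2, hy⟩)))
      · rintro ((h | h | ⟨hx1, hy2⟩ | ⟨hx2, hy1⟩) | h | h |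
          ⟨hx, h | h | ⟨_, hy2⟩ | ⟨hv2, _⟩⟩ | ⟨hy, h | h | ⟨hx1, hv2⟩ | ⟨hx2, _⟩⟩)
        · exact Or.inl (Or.inl h)
        · exact Or.inr (Or.inl h)
        · exact Or.inr (Or.inr (Or.inl ⟨Or.inr hx1, hy2⟩))
        · exact Or.inr (Or.inr (Or.inr ⟨hx2, Or.inr hy1⟩))
        · exact Or.inl (Or.inr (Or.inl h))
        · exact Or.inl (Or.inr (Or.inr (Or.inl h)))
        · exact Or.inl (Or.inr (Or.inr (Or.inr (Or.inl ⟨hx, h⟩))))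
        · exact absurd h n1
        · exact Or.inr (Or.inr (Or.inl ⟨Or.inl hx, hy2⟩))
        · exact absurd hv2 hv2'
        · exact Or.inl (Or.inr (Or.inr (Or.inr (Or.inr ⟨hy, h⟩))))
        · exact absurd h n2
        · exact absurd hv2 hv2'
        · exact Or.inr (Or.inr (Or.inr ⟨hx2, Or.inl hy⟩))
    · have hv1' : v ∉ V₁ := Finset.disjoint_right.mp d hv2
      have T := DCo.series (Finset.disjoint_insert_right.mpr ⟨hu1, d⟩)
        h1 (ih2 v u auv avu hv2 hu2)
      rw [Finset.union_insert] at T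
      refine dco_iff T ?_
      intro x y
      have n1 : ¬ A₁ v y := fun h => hv1' (c1 h).1
      have n2 : ¬ A₁ x v := fun h => hv1' (c1 h).2.1
      simp only [twinArc, Finset.mem_insert]
      constructor
      · rintro (h | (h | h | h | ⟨hx, h⟩ | ⟨hy, h⟩) | ⟨hx1, hy | hy⟩ | ⟨hx | hx, hy1⟩)
        · exact Or.inl (Or.inl h)
        · exact Or.inl (Or.inr (Or.inl h))
        · exact Or.inr (Or.inl h)
        · exact Or.inr (Or.inr (Or.inl h))
        · exact Or.inr (Or.inr (Or.inr (Or.inl ⟨hx, Or.inr (Or.inl h)⟩)))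
        · exact Or.inr (Or.inr (Or.inr (Or.inr ⟨hy, Or.inr (Or.inl h)⟩)))
        · exact Or.inr (Or.inr (Or.inr (Or.inr ⟨hy, Or.inr (Or.inr (Or.inl ⟨hx1, hv2⟩))⟩)))
        · exact Or.inl (Or.inr (Or.inr (Or.inl ⟨hx1, hy⟩)))
        · exact Or.inr (Or.inr (Or.inr (Or.inl ⟨hx, Or.inr (Or.inr (Or.inr ⟨hv2, hy1⟩))⟩)))
        · exact Or.inl (Or.inr (Or.inr (Or.inr ⟨hx, hy1⟩)))
      · rintro ((h | h | ⟨hx1, hy2⟩ | ⟨hx2, hy1⟩) | h | h |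
          ⟨hx, h | h | ⟨hv1, _⟩ | ⟨_, hy1⟩⟩ | ⟨hy, h | h | ⟨hx1, _⟩ | ⟨_, hv1⟩⟩)
        · exact Or.inl h
        · exact Or.inr (Or.inl (Or.inl h))
        · exact Or.inr (Or.inr (Or.inl ⟨hx1, Or.inr hy2⟩))
        · exact Or.inr (Or.inr (Or.inr ⟨Or.inr hx2, hy1⟩))
        · exact Or.inr (Or.inl (Or.inr (Or.inl h)))
        · exact Or.inr (Or.inl (Or.inr (Or.inr (Or.inl h))))
        · exact absurd h n1
        · exact Or.inr (Or.inl (Or.inr (Or.inr (Or.inr (Or.inl ⟨hx, h⟩)))))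
        · exact absurd hv1 hv1'
        · exact Or.inr (Or.inr (Or.inr ⟨Or.inl hx, hy1⟩))
        · exact absurd h n2
        · exact Or.inr (Or.inl (Or.inr (Or.inr (Or.inr (Or.inr ⟨hy, h⟩)))))
        · exact Or.inr (Or.inr (Or.inl ⟨hx1, Or.inl hy⟩))
        · exact absurd hv1 hv1'
  | @order V₁ V₂ A₁ A₂ d h1 h2 ih1 ih2 =>
    intro v u auv avu hv hu
    have hu1 : u ∉ V₁ := fun h => hu (Finset.mem_union_left _ h)
    have hu2 : u ∉ V₂ := fun h => hu (Finset.mem_union_right _ h)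
    have c1 := dco_sub h1
    have c2 := dco_sub h2
    rcases Finset.mem_union.mp hv with hv1 | hv2
    · have hv2' : v ∉ V₂ := Finset.disjoint_left.mp d hv1
      have T := DCo.order (Finset.disjoint_insert_left.mpr ⟨hu2, d⟩)
        (ih1 v u auv avu hv1 hu1) h2
      rw [Finset.insert_union] at T
      refine dco_iff T ?_
      intro x y
      have n1 : ¬ A₂ v y := fun h => hv2' (c2 h).1
      have n2 : ¬ A₂ x v := fun h => hv2' (c2 h).2.1
      simp only [twinArc, Finset.mem_insert]
      constructor
      · rintro ((h | h | h | ⟨hx, h⟩ | ⟨hy, h⟩) | h | ⟨hx | hx, hy2⟩)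
        · exact Or.inl (Or.inl h)
        · exact Or.inr (Or.inl h)
        · exact Or.inr (Or.inr (Or.inl h))
        · exact Or.inr (Or.inr (Or.inr (Or.inl ⟨hx, Or.inl h⟩)))
        · exact Or.inr (Or.inr (Or.inr (Or.inr ⟨hy, Or.inl h⟩)))
        · exact Or.inl (Or.inr (Or.inl h))
        · exact Or.inr (Or.inr (Or.inr (Or.inl ⟨hx, Or.inr (Or.inr ⟨hv1, hy2⟩)⟩)))
        · exact Or.inl (Or.inr (Or.inr ⟨hx, hy2⟩))
      · rintro ((h | h | ⟨hx1, hy2⟩) | h | h |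
          ⟨hx, h | h | ⟨_, hy2⟩⟩ | ⟨hy, h | h | ⟨hx1, hv2⟩⟩)
        · exact Or.inl (Or.inl h)
        · exact Or.inr (Or.inl h)
        · exact Or.inr (Or.inr ⟨Or.inr hx1, hy2⟩)
        · exact Or.inl (Or.inr (Or.inl h))
        · exact Or.inl (Or.inr (Or.inr (Or.inl h)))
        · exact Or.inl (Or.inr (Or.inr (Or.inr (Or.inl ⟨hx, h⟩))))
        · exact absurd h n1
        · exact Or.inr (Or.inr ⟨Or.inl hx, hy2⟩)
        · exact Or.inl (Or.inr (Or.inr (Or.inr (Or.inr ⟨hy, h⟩))))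
        · exact absurd h n2
        · exact absurd hv2 hv2'
    · have hv1' : v ∉ V₁ := Finset.disjoint_right.mp d hv2
      have T := DCo.order (Finset.disjoint_insert_right.mpr ⟨hu1, d⟩)
        h1 (ih2 v u auv avu hv2 hu2)
      rw [Finset.union_insert] at T
      refine dco_iff T ?_
      intro x y
      have n1 : ¬ A₁ v y := fun h => hv1' (c1 h).1
      have n2 : ¬ A₁ x v := fun h => hv1' (c1 h).2.1
      simp only [twinArc, Finset.mem_insert]
      constructor
      · rintro (h | (h | h | h | ⟨hx, h⟩ | ⟨hy, h⟩) | ⟨hx1, hy | hy⟩)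
        · exact Or.inl (Or.inl h)
        · exact Or.inl (Or.inr (Or.inl h))
        · exact Or.inr (Or.inl h)
        · exact Or.inr (Or.inr (Or.inl h))
        · exact Or.inr (Or.inr (Or.inr (Or.inl ⟨hx, Or.inr (Or.inl h)⟩)))
        · exact Or.inr (Or.inr (Or.inr (Or.inr ⟨hy, Or.inr (Or.inl h)⟩)))
        · exact Or.inr (Or.inr (Or.inr (Or.inr ⟨hy, Or.inr (Or.inr ⟨hx1, hv2⟩)⟩)))
        · exact Or.inl (Or.inr (Or.inr ⟨hx1, hy⟩))
      · rintro ((h | h | ⟨hx1, hy2⟩) | h | h |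
          ⟨hx, h | h | ⟨hv1, _⟩⟩ | ⟨hy, h | h | ⟨hx1, hv2⟩⟩)
        · exact Or.inl h
        · exact Or.inr (Or.inl (Or.inl h))
        · exact Or.inr (Or.inr ⟨hx1, Or.inr hy2⟩)
        · exact Or.inr (Or.inl (Or.inr (Or.inl h)))
        · exact Or.inr (Or.inl (Or.inr (Or.inr (Or.inl h))))
        · exact absurd h n1
        · exact Or.inr (Or.inl (Or.inr (Or.inr (Or.inr (Or.inl ⟨hx, h⟩)))))
        · exact absurd hv1 hv1'
        · exact absurd h n2
        · exact Or.inr (Or.inl (Or.inr (Or.inr (Or.inr (Or.inr ⟨hy, h⟩)))))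
        · exact Or.inr (Or.inr ⟨hx1, Or.inl hy⟩)

lemma tb_to_dco {V : Finset ℕ} {A : ℕ → ℕ → Prop} (h : TwinBuilt V A) : DCo V A := by
  induction h with
  | single v => exact DCo.single v
  | union d _ _ ih1 ih2 => exact DCo.union d ih1 ih2
  | twin v u auv avu hv hu _ ih => exact dco_twin_closed ih v u auv avu hv hu

lemma dco_to_tb : ∀ n (V : Finset ℕ) (A : ℕ → ℕ → Prop),
    V.card ≤ n → DCo V A → TwinBuilt V A := by
  intro n
  induction n with
  | zero =>
    intro V A hc h
    have := Finset.card_pos.mpr (dco_ne h)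
    omega
  | succ n ih =>
    intro V A hc h
    by_cases h2 : 2 ≤ V.card
    · obtain ⟨x, hx, y, hy, hxy, htw⟩ := dco_twins h h2
      have hx' : x ∈ V.erase y := Finset.mem_erase.mpr ⟨hxy, hx⟩
      have hery : (V.erase y).Nonempty := ⟨x, hx'⟩
      have hdel := dco_del h y hery
      have hcard : (V.erase y).card ≤ n := by
        have := Finset.card_erase_of_mem hy
        omega
      have htb := ih _ _ hcard hdel
      have hy' : y ∉ V.erase y := Finset.notMem_erase y V
      have T := TwinBuilt.twin x y (A y x) (A x y) hx' hy' htb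
      rw [Finset.insert_erase hy] at T
      have noloop : ∀ z, ¬ A z z := fun z hz => (dco_sub h hz).2.2 rfl
      have hE : twinArc (fun a b => A a b ∧ a ≠ y ∧ b ≠ y) x y (A y x) (A x y) = A := by
        funext a b
        apply propext
        constructor
        · rintro (⟨h1, _, _⟩ | ⟨rfl, rfl, h1⟩ | ⟨rfl, rfl, h1⟩ | ⟨rfl, h1, _, hby⟩ |
            ⟨rfl, h1, hay, _⟩)
          · exact h1
          · exact h1
          · exact h1
          · have hbx : b ≠ x := fun e => noloop x (e ▸ h1)
            exact ((htw b hbx hby).2).mp h1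
          · have hax : a ≠ x := fun e => noloop x (e ▸ h1)
            exact ((htw a hax hay).1).mp h1
        · intro hab
          have hne := (dco_sub h hab).2.2
          by_cases hay : a = y
          · by_cases hbx : b = x
            · refine Or.inr (Or.inl ⟨hay, hbx, ?_⟩)
              rw [hay, hbx] at hab
              exact hab
            · have hby : b ≠ y := fun e => hne (hay.trans e.symm)
              have hiff := (htw b hbx hby).2
              have hab' : A y b := by rw [hay] at hab; exact hab
              exact Or.inr (Or.inr (Or.inr (Or.inl ⟨hay, hiff.mpr hab', hxy, hby⟩)))
          · by_cases hby : b = y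
            · by_cases hax : a = x
              · refine Or.inr (Or.inr (Or.inl ⟨hax, hby, ?_⟩))
                rw [hax, hby] at hab
                exact hab
              · have hiff := (htw a hax hay).1
                have hab' : A a y := by rw [hby] at hab; exact hab
                exact Or.inr (Or.inr (Or.inr (Or.inr ⟨hby, hiff.mpr hab', hay, hxy⟩)))
            · exact Or.inl ⟨hab, hay, hby⟩
      rw [hE] at T
      exact T
    · have h1 : V.card = 1 := by
        have := Finset.card_pos.mpr (dco_ne h)
        omega
      have hA := dco_card1 h h1
      obtain ⟨v, rfl⟩ := Finset.card_eq_one.mp h1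
      rw [hA]
      exact TwinBuilt.single v

end Aux

theorem stmt_1 (V : Finset ℕ) (A : ℕ → ℕ → Prop) :
    DCo V A ↔ TwinBuilt V A :=
  ⟨fun h => dco_to_tb V.card V A le_rfl h, fun h => tb_to_dco h⟩
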